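/- Let θ be a CPWL function with (z̄,v̄) ∈ gph ∂θ and fix a representation of v̄ with index sets J₁, J₂. Then the critical cone satisfies 𝒦(z̄,v̄) = {u ∈ ℝ^m : ⟨a_i − a_j, u⟩ = 0 for all i,j ∈ J₁; ⟨a_i − a_j, u⟩ ≤ 0 for all (i,j) ∈ (K(z̄)∖J₁) × J₁; ⟨d_i, u⟩ = 0 for all i ∈ J₂; and ⟨d_i, u⟩ ≤ 0 for all i ∈ I(z̄)∖J₂}. -/

import Mathlib

open Filter Topology Set RealInnerProductSpace

noncomputable section

abbrev Ev (k : ℕ) := EuclideanSpace ℝ (Fin k)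

/-- The Bouligand–Severi tangent cone to a set `s` at `x`. -/
def tcone {E : Type*} [NormedAddCommGroup E] [NormedSpace ℝ E] (s : Set E) (x : E) : Set E :=
  {w | ∃ (z : ℕ → E) (c : ℕ → ℝ), (∀ k, z k ∈ s) ∧ (∀ k, 0 ≤ c k) ∧
      Tendsto z atTop (𝓝 x) ∧ Tendsto (fun k => c k • (z k - x)) atTop (𝓝 w)}

/-- The data of a convex piecewise linear (CPWL) extended-real-valued function on `ℝ^m`:
`θ(z) = max_i (⟨a i, z⟩ - al i)` on the polyhedron `dom θ = {z | ⟨d i, z⟩ ≤ be i ∀ i}`,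
and `θ(z) = +∞` outside of it. -/
structure CPWL (m : ℕ) where
  l : ℕ
  p : ℕ
  hl : 0 < l
  a : Fin l → Ev m
  al : Fin l → ℝ
  d : Fin p → Ev m
  be : Fin p → ℝ
  dom_nonempty : ∃ z : Ev m, ∀ i, ⟪d i, z⟫ ≤ be i

namespace CPWL

variable {m : ℕ} (θ : CPWL m)

/-- The (polyhedral) domain of the CPWL function. -/
def dom : Set (Ev m) := {z | ∀ i, ⟪θ.d i, z⟫ ≤ θ.be i}

/-- The real value `max_i (⟨a i, z⟩ - al i)` of the CPWL function (meaningful on its domain). -/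
def val (z : Ev m) : ℝ := ⨆ i : Fin θ.l, (⟪θ.a i, z⟫ - θ.al i)

/-- The CPWL function as an extended-real-valued function. -/
def eval (z : Ev m) : EReal :=
  @ite _ (z ∈ θ.dom) (Classical.propDecidable _) ((θ.val z : ℝ) : EReal) ⊤

/-- The subdifferential (of convex analysis) of the CPWL function. -/
def subdiff (z : Ev m) : Set (Ev m) :=
  {v | z ∈ θ.dom ∧ ∀ z' ∈ θ.dom, ⟪v, z' - z⟫ ≤ θ.val z' - θ.val z}

/-- Active indices `K(z)` of the max-representation. -/
def Kact (z : Ev m) : Set (Fin θ.l) := {i | θ.val z = ⟪θ.a i, z⟫ - θ.al i}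

/-- Active indices `I(z)` of the domain constraints. -/
def Iact (z : Ev m) : Set (Fin θ.p) := {i | ⟪θ.d i, z⟫ = θ.be i}

/-- The critical cone `𝒦(z̄,v̄) = {w ∈ T(z̄; dom θ) : ⟨v̄,w⟩ = θ′(z̄;w)}`. -/
def crit (zb vb : Ev m) : Set (Ev m) :=
  {w | w ∈ tcone θ.dom zb ∧
    Tendsto (fun t : ℝ => (θ.val (zb + t • w) - θ.val zb) / t) (𝓝[>] (0 : ℝ))
      (𝓝 ⟪vb, w⟫)}

/-- The graph of the subdifferential mapping. -/
def gph : Set (Ev m × Ev m) := {zv | zv.2 ∈ θ.subdiff zv.1}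

/-- The graphical derivative `(D∂θ)(z̄,v̄)(u)`. -/
def Dsub (zb vb u : Ev m) : Set (Ev m) := {w | (u, w) ∈ tcone θ.gph (zb, vb)}

/-- The regular coderivative `(D̂*∂θ)(z̄,v̄)(u)`. -/
def Dhat (zb vb u : Ev m) : Set (Ev m) :=
  {w | ∀ h ∈ tcone θ.gph (zb, vb), ⟪w, h.1⟫ - ⟪u, h.2⟫ ≤ 0}

end CPWL

section VarSys

variable {n m : ℕ}

/-- The adjoint `∇Φ(x)*` of the Jacobian of `Φ` at `x`. -/
def adjD (Φ : Ev n → Ev m) (x : Ev n) : Ev m →L[ℝ] Ev n :=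
  ContinuousLinearMap.adjoint (fderiv ℝ Φ x)

/-- `Ψ(x,v) = f(x) + ∇Φ(x)* v`. -/
def Psi (f : Ev n → Ev n) (Φ : Ev n → Ev m) (x : Ev n) (v : Ev m) : Ev n :=
  f x + adjD Φ x v

/-- The partial Jacobian `∇ₓΨ(x̄,v̄)`. -/
def gradxPsi (f : Ev n → Ev n) (Φ : Ev n → Ev m) (xb : Ev n) (vb : Ev m) :
    Ev n →L[ℝ] Ev n :=
  fderiv ℝ (fun x => Psi f Φ x vb) xb

/-- The Lagrange multiplier set `Λ(x̄)` of the variational system. -/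
def Lam (f : Ev n → Ev n) (Φ : Ev n → Ev m) (θ : CPWL m) (xb : Ev n) : Set (Ev m) :=
  {v | Psi f Φ xb v = 0 ∧ v ∈ θ.subdiff (Φ xb)}

/-- `v̄` is a critical multiplier for the variational system. -/
def IsCritical (f : Ev n → Ev n) (Φ : Ev n → Ev m) (θ : CPWL m) (xb : Ev n) (vb : Ev m) :
    Prop :=
  ∃ ξ : Ev n, ξ ≠ 0 ∧ ∃ w ∈ θ.Dsub (Φ xb) vb (fderiv ℝ Φ xb ξ),
    gradxPsi f Φ xb vb ξ + adjD Φ xb w = 0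

/-- The solution map of the canonically perturbed variational system. -/
def Smap (f : Ev n → Ev n) (Φ : Ev n → Ev m) (θ : CPWL m) (p₁ : Ev n) (p₂ : Ev m) :
    Set (Ev n × Ev m) :=
  {xv | Psi f Φ xv.1 xv.2 = p₁ ∧ xv.2 ∈ θ.subdiff (Φ xv.1 + p₂)}

end VarSys

section General

variable {n m : ℕ}

/-- The subdifferential of a general extended-real-valued function. -/
def subdiffE (θ : Ev m → EReal) (z : Ev m) : Set (Ev m) :=
  {v | ∀ z', ((⟪v, z' - z⟫ : ℝ) : EReal) ≤ θ z' - θ z}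

/-- The graph of the subdifferential of a general extended-real-valued function. -/
def gphE (θ : Ev m → EReal) : Set (Ev m × Ev m) := {zv | zv.2 ∈ subdiffE θ zv.1}

/-- The graphical derivative of the subdifferential, general case. -/
def DsubE (θ : Ev m → EReal) (zb vb u : Ev m) : Set (Ev m) :=
  {w | (u, w) ∈ tcone (gphE θ) (zb, vb)}

/-- The Lagrange multiplier set, general case. -/
def LamE (f : Ev n → Ev n) (Φ : Ev n → Ev m) (θ : Ev m → EReal) (xb : Ev n) :
    Set (Ev m) :=
  {v | Psi f Φ xb v = 0 ∧ v ∈ subdiffE θ (Φ xb)}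

/-- The solution map of the canonically perturbed variational system, general case. -/
def SmapE (f : Ev n → Ev n) (Φ : Ev n → Ev m) (θ : Ev m → EReal) (p₁ : Ev n)
    (p₂ : Ev m) : Set (Ev n × Ev m) :=
  {xv | Psi f Φ xv.1 xv.2 = p₁ ∧ xv.2 ∈ subdiffE θ (Φ xv.1 + p₂)}

end General

section Composite

variable {n m : ℕ}

/-- The gradient `∇ₓL(·,v)` of the Lagrangian `L(x,v) = φ₀(x) + ⟨Φ(x),v⟩`. -/
def gradL (φ₀ : Ev n → ℝ) (Φ : Ev n → Ev m) (v : Ev m) (x : Ev n) : Ev n :=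
  gradient (fun y => φ₀ y + ⟪Φ y, v⟫) x

/-- The Hessian `∇²ₓₓL(x̄,v)` as a linear operator. -/
def HessOp (φ₀ : Ev n → ℝ) (Φ : Ev n → Ev m) (v : Ev m) (xb : Ev n) : Ev n →L[ℝ] Ev n :=
  fderiv ℝ (gradL φ₀ Φ v) xb

/-- The Lagrange multiplier set `Λ_com(x̄)` of the composite optimization problem. -/
def LamCom (φ₀ : Ev n → ℝ) (Φ : Ev n → Ev m) (θ : CPWL m) (xb : Ev n) : Set (Ev m) :=
  {v | gradient φ₀ xb + adjD Φ xb v = 0 ∧ v ∈ θ.subdiff (Φ xb)}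

/-- Criticality of a multiplier in the composite optimization setting. -/
def IsCriticalCom (φ₀ : Ev n → ℝ) (Φ : Ev n → Ev m) (θ : CPWL m) (xb : Ev n) (v : Ev m) :
    Prop :=
  ∃ ξ : Ev n, ξ ≠ 0 ∧ ∃ w ∈ θ.Dsub (Φ xb) v (fderiv ℝ Φ xb ξ),
    HessOp φ₀ Φ v xb ξ + adjD Φ xb w = 0

/-- The solution map of the canonically perturbed KKT system of composite optimization. -/
def SKKT (φ₀ : Ev n → ℝ) (Φ : Ev n → Ev m) (θ : CPWL m) (p₁ : Ev n) (p₂ : Ev m) :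
    Set (Ev n × Ev m) :=
  {xv | gradient φ₀ xv.1 + adjD Φ xv.1 xv.2 = p₁ ∧ xv.2 ∈ θ.subdiff (Φ xv.1 + p₂)}

/-- `x̄` is a local minimizer of `φ₀ + θ∘Φ`. -/
def LocalMin (φ₀ : Ev n → ℝ) (Φ : Ev n → Ev m) (θ : CPWL m) (xb : Ev n) : Prop :=
  ∃ U ∈ 𝓝 xb, ∀ x ∈ U,
    ((φ₀ xb : ℝ) : EReal) + θ.eval (Φ xb) ≤ ((φ₀ x : ℝ) : EReal) + θ.eval (Φ x)

end Composite

section Calmness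

variable {n m : ℕ}

/-- Isolated calmness of a solution map at `((0,0), q0)`. -/
def IsolCalm (S : Ev n × Ev m → Set (Ev n × Ev m)) (q0 : Ev n × Ev m) : Prop :=
  ∃ c : ℝ, 0 ≤ c ∧ ∃ U ∈ 𝓝 (0 : Ev n × Ev m), ∃ V ∈ 𝓝 q0,
    ∀ p ∈ U, ∀ q ∈ S p ∩ V, ‖q - q0‖ ≤ c * (‖p.1‖ + ‖p.2‖)

/-- Robust isolated calmness of a solution map at `((0,0), q0)`. -/
def RobustIsolCalm (S : Ev n × Ev m → Set (Ev n × Ev m)) (q0 : Ev n × Ev m) : Prop :=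
  ∃ c : ℝ, 0 ≤ c ∧ ∃ U ∈ 𝓝 (0 : Ev n × Ev m), ∃ V ∈ 𝓝 q0,
    (∀ p ∈ U, ∀ q ∈ S p ∩ V, ‖q - q0‖ ≤ c * (‖p.1‖ + ‖p.2‖)) ∧
    (∀ p ∈ U, (S p ∩ V).Nonempty)

/-- The Lipschitz-like (Aubin) property of a solution map around `((0,0), q0)`. -/
def LipschitzLike (S : Ev n × Ev m → Set (Ev n × Ev m)) (q0 : Ev n × Ev m) : Prop :=
  ∃ c : ℝ, 0 ≤ c ∧ ∃ U ∈ 𝓝 (0 : Ev n × Ev m), ∃ V ∈ 𝓝 q0,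
    ∀ p ∈ U, ∀ p' ∈ U, ∀ q ∈ S p ∩ V, ∃ q' ∈ S p', ‖q - q'‖ ≤ c * ‖p - p'‖

end Calmness


namespace CPWL

variable {m : ℕ} (θ : CPWL m)

lemma le_val (z : Ev m) (i : Fin θ.l) : ⟪θ.a i, z⟫ - θ.al i ≤ θ.val z := by
  haveI : Nonempty (Fin θ.l) := ⟨⟨0, θ.hl⟩⟩
  have : (⟪θ.a i, z⟫ - θ.al i : ℝ) ≤ ⨆ j, (⟪θ.a j, z⟫ - θ.al j : ℝ) :=
    le_ciSup (f := fun j : Fin θ.l => (⟪θ.a j, z⟫ - θ.al j : ℝ))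
      (Set.Finite.bddAbove (Set.finite_range _)) i
  exact this

lemma exists_Kact (z : Ev m) : ∃ i, i ∈ θ.Kact z := by
  haveI : Nonempty (Fin θ.l) := ⟨⟨0, θ.hl⟩⟩
  obtain ⟨i, hi⟩ : ∃ i, (⟪θ.a i, z⟫ - θ.al i : ℝ) = ⨆ j, (⟪θ.a j, z⟫ - θ.al j : ℝ) :=
    exists_eq_ciSup_of_finite
  exact ⟨i, hi.symm⟩

lemma val_lt_of_not_Kact {z : Ev m} {i : Fin θ.l} (h : i ∉ θ.Kact z) :
    ⟪θ.a i, z⟫ - θ.al i < θ.val z :=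
  lt_of_le_of_ne (θ.le_val z i) (fun he => h he.symm)

set_option maxHeartbeats 1000000 in
/-- tangent cone to the polyhedral domain -/
lemma tcone_dom {zb : Ev m} (hzb : zb ∈ θ.dom) :
    tcone θ.dom zb = {w | ∀ i ∈ θ.Iact zb, ⟪θ.d i, w⟫ ≤ 0} := by
  ext w
  constructor
  · rintro ⟨z, c, hz, hc, _, hlim⟩ i hi
    have hcont : Continuous (fun v : Ev m => ⟪θ.d i, v⟫) := continuous_const.inner continuous_id
    have : Tendsto (fun k => ⟪θ.d i, c k • (z k - zb)⟫) atTop (𝓝 ⟪θ.d i, w⟫) :=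
      (hcont.tendsto w).comp hlim
    refine le_of_tendsto this (Eventually.of_forall fun k => ?_)
    have h1 : ⟪θ.d i, z k - zb⟫ ≤ 0 := by
      have := hz k i
      rw [inner_sub_right, hi]
      linarith
    rw [real_inner_smul_right]
    exact mul_nonpos_of_nonneg_of_nonpos (hc k) h1
  · intro hw
    -- eventually in 𝓝[≥]0, zb + t•w ∈ dom
    have hev : ∀ᶠ t in 𝓝[≥] (0:ℝ), zb + t • w ∈ θ.dom := by
      simp only [CPWL.dom, Set.mem_setOf_eq]
      rw [eventually_all]
      intro i
      by_cases hi : i ∈ θ.Iact zb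
      · refine eventually_nhdsWithin_of_forall fun t ht => ?_
        rw [inner_add_right, real_inner_smul_right, hi]
        have : t * ⟪θ.d i, w⟫ ≤ 0 := mul_nonpos_of_nonneg_of_nonpos ht (hw i hi)
        linarith
      · have hlt : ⟪θ.d i, zb⟫ < θ.be i := lt_of_le_of_ne (hzb i) hi
        have hcont : ContinuousAt (fun t : ℝ => ⟪θ.d i, zb + t • w⟫) 0 := by
          exact (continuous_const.inner (continuous_const.add
            (continuous_id.smul continuous_const))).continuousAt
        have : ∀ᶠ t in 𝓝 (0:ℝ), ⟪θ.d i, zb + t • w⟫ < θ.be i := by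
          refine hcont.eventually_lt_const ?_
          simpa using hlt
        exact (this.filter_mono nhdsWithin_le_nhds).mono fun t ht => le_of_lt ht
    obtain ⟨δ, hδ0, hδ⟩ := (mem_nhdsGE_iff_exists_Icc_subset).1 hev
    have hδpos : 0 < δ := hδ0
    refine ⟨fun k => zb + (δ / ((k:ℝ) + 1)) • w, fun k => ((k:ℝ) + 1) / δ,
      fun k => ?_, fun k => ?_, ?_, ?_⟩
    · apply hδ
      constructor
      · positivity
      · rw [div_le_iff₀ (by positivity)]
        nlinarith [hδpos]
    · positivity
    · have h1 : Tendsto (fun k : ℕ => δ / ((k:ℝ) + 1)) atTop (𝓝 0) :=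
        tendsto_const_nhds.div_atTop (tendsto_natCast_atTop_atTop.atTop_add tendsto_const_nhds)
      have hcont : Continuous (fun t : ℝ => zb + t • w) :=
        continuous_const.add (continuous_id.smul continuous_const)
      have h2 := (hcont.tendsto 0).comp h1
      change Tendsto (fun k : ℕ => zb + (δ / ((k:ℝ) + 1)) • w) atTop (𝓝 (zb + (0:ℝ) • w)) at h2
      rw [zero_smul, add_zero] at h2
      exact h2
    · have he : ∀ k : ℕ, (((k:ℝ) + 1) / δ) • ((zb + (δ / ((k:ℝ) + 1)) • w) - zb) = w := by
        intro k
        have hk : ((k:ℝ) + 1) ≠ 0 := by positivity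
        have hδ' : δ ≠ 0 := ne_of_gt hδpos
        rw [add_sub_cancel_left, smul_smul]
        have hmm : ((k:ℝ) + 1) / δ * (δ / ((k:ℝ) + 1)) = 1 := by field_simp
        rw [hmm, one_smul]
      have heq : (fun k : ℕ => (((k:ℝ) + 1) / δ) • ((zb + (δ / ((k:ℝ) + 1)) • w) - zb))
          = fun _ => w := funext he
      rw [heq]
      exact tendsto_const_nhds


/-- directional derivative value: max over active indices -/
def dval (zb w : Ev m) : ℝ := ⨆ i : θ.Kact zb, ⟪θ.a i.1, w⟫

lemma le_dval (zb w : Ev m) {i : Fin θ.l} (hi : i ∈ θ.Kact zb) :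
    ⟪θ.a i, w⟫ ≤ θ.dval zb w := by
  haveI : Nonempty (θ.Kact zb) := ⟨⟨_, hi⟩⟩
  exact le_ciSup (f := fun j : θ.Kact zb => (⟪θ.a j.1, w⟫ : ℝ))
    (Set.Finite.bddAbove (Set.finite_range _)) ⟨i, hi⟩

lemma exists_dval (zb w : Ev m) : ∃ i ∈ θ.Kact zb, ⟪θ.a i, w⟫ = θ.dval zb w := by
  haveI : Nonempty (θ.Kact zb) := by
    obtain ⟨i, hi⟩ := θ.exists_Kact zb; exact ⟨⟨i, hi⟩⟩
  haveI : Finite (θ.Kact zb) := Subtype.finite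
  obtain ⟨i, hi⟩ : ∃ i : θ.Kact zb, (⟪θ.a i.1, w⟫ : ℝ) = ⨆ j : θ.Kact zb, (⟪θ.a j.1, w⟫ : ℝ) :=
    exists_eq_ciSup_of_finite
  exact ⟨i.1, i.2, hi⟩

set_option maxHeartbeats 1000000 in
lemma val_eventually (zb w : Ev m) :
    ∀ᶠ t in 𝓝[>] (0:ℝ), θ.val (zb + t • w) = θ.val zb + t * θ.dval zb w := by
  set M := θ.dval zb w with hM
  have h1 : ∀ i : Fin θ.l, ∀ᶠ t in 𝓝[>] (0:ℝ),
      ⟪θ.a i, zb + t • w⟫ - θ.al i ≤ θ.val zb + t * M := by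
    intro i
    by_cases hi : i ∈ θ.Kact zb
    · refine eventually_nhdsWithin_of_forall fun t ht => ?_
      have ht' : (0:ℝ) ≤ t := le_of_lt ht
      have hgi : ⟪θ.a i, w⟫ ≤ M := θ.le_dval zb w hi
      have hfi : θ.val zb = ⟪θ.a i, zb⟫ - θ.al i := hi
      rw [inner_add_right, real_inner_smul_right]
      nlinarith
    · have hlt : ⟪θ.a i, zb⟫ - θ.al i < θ.val zb := θ.val_lt_of_not_Kact hi
      have hcont : ContinuousAt
          (fun t : ℝ => ⟪θ.a i, zb + t • w⟫ - θ.al i - t * M) 0 := by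
        exact (((continuous_const.inner (continuous_const.add
          (continuous_id.smul continuous_const))).sub continuous_const).sub
          (continuous_id.mul continuous_const)).continuousAt
      have hev : ∀ᶠ t in 𝓝 (0:ℝ),
          ⟪θ.a i, zb + t • w⟫ - θ.al i - t * M < θ.val zb := by
        refine hcont.eventually_lt_const ?_
        simpa using hlt
      exact (hev.filter_mono nhdsWithin_le_nhds).mono fun t ht => by linarith
  have h2 : ∀ᶠ t in 𝓝[>] (0:ℝ), ∀ i : Fin θ.l,
      ⟪θ.a i, zb + t • w⟫ - θ.al i ≤ θ.val zb + t * M := eventually_all.2 h1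
  filter_upwards [h2, self_mem_nhdsWithin] with t hall ht
  have ht' : (0:ℝ) ≤ t := le_of_lt ht
  haveI : Nonempty (Fin θ.l) := ⟨⟨0, θ.hl⟩⟩
  apply le_antisymm
  · exact ciSup_le hall
  · obtain ⟨j, hjK, hjM⟩ := θ.exists_dval zb w
    have : θ.val zb + t * M = ⟪θ.a j, zb + t • w⟫ - θ.al j := by
      rw [inner_add_right, real_inner_smul_right, hjM]
      have : θ.val zb = ⟪θ.a j, zb⟫ - θ.al j := hjK
      linarith
    rw [this]
    exact θ.le_val _ j

lemma quot_tendsto (zb w : Ev m) :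
    Tendsto (fun t : ℝ => (θ.val (zb + t • w) - θ.val zb) / t) (𝓝[>] (0:ℝ))
      (𝓝 (θ.dval zb w)) := by
  apply Tendsto.congr' (f₁ := fun _ => θ.dval zb w)
  · filter_upwards [θ.val_eventually zb w, self_mem_nhdsWithin] with t hv ht
    rw [hv, add_sub_cancel_left]
    exact (mul_div_cancel_left₀ _ (ne_of_gt ht)).symm
  · exact tendsto_const_nhds


end CPWL

/-- explicit calculation of the critical cone of a CPWL function. -/
theorem stmt1 {m : ℕ} (θ : CPWL m) (zb vb : Ev m) (hzv : vb ∈ θ.subdiff zb)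
    (lam : Fin θ.l → ℝ) (mu : Fin θ.p → ℝ)
    (hlam0 : ∀ i, 0 ≤ lam i) (hlamK : ∀ i, 0 < lam i → i ∈ θ.Kact zb)
    (hlam1 : ∑ i, lam i = 1)
    (hmu0 : ∀ i, 0 ≤ mu i) (hmuI : ∀ i, 0 < mu i → i ∈ θ.Iact zb)
    (hrep : vb = (∑ i, lam i • θ.a i) + ∑ i, mu i • θ.d i) :
    θ.crit zb vb =
      {u : Ev m |
        (∀ i j, 0 < lam i → 0 < lam j → ⟪θ.a i - θ.a j, u⟫ = 0) ∧
        (∀ i j, i ∈ θ.Kact zb → lam i = 0 → 0 < lam j → ⟪θ.a i - θ.a j, u⟫ ≤ 0) ∧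
        (∀ i, 0 < mu i → ⟪θ.d i, u⟫ = 0) ∧
        (∀ i, i ∈ θ.Iact zb → mu i = 0 → ⟪θ.d i, u⟫ ≤ 0)} := by
  classical
  obtain ⟨hzb, _⟩ := hzv
  ext w
  simp only [CPWL.crit, Set.mem_setOf_eq]
  have htc := θ.tcone_dom hzb
  have hvw : ⟪vb, w⟫ = (∑ i, lam i * ⟪θ.a i, w⟫) + ∑ i, mu i * ⟪θ.d i, w⟫ := by
    rw [hrep, inner_add_left]
    congr 1
    · rw [sum_inner]
      exact Finset.sum_congr rfl fun i _ => real_inner_smul_left _ _ _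
    · rw [sum_inner]
      exact Finset.sum_congr rfl fun i _ => real_inner_smul_left _ _ _
  set M := θ.dval zb w with hMdef
  have hsum1 : ∑ i, lam i * M = M := by rw [← Finset.sum_mul, hlam1, one_mul]
  constructor
  · rintro ⟨hwt, hlim⟩
    have hMvw : ⟪vb, w⟫ = M := tendsto_nhds_unique hlim (θ.quot_tendsto zb w)
    have hd : ∀ i ∈ θ.Iact zb, ⟪θ.d i, w⟫ ≤ 0 := by
      rw [htc] at hwt; exact hwt
    have hS1 : ∀ i, lam i * ⟪θ.a i, w⟫ ≤ lam i * M := fun i => by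
      rcases eq_or_lt_of_le (hlam0 i) with h | h
      · rw [← h]; simp
      · exact mul_le_mul_of_nonneg_left (θ.le_dval zb w (hlamK i h)) (le_of_lt h)
    have hS2 : ∀ i, mu i * ⟪θ.d i, w⟫ ≤ 0 := fun i => by
      rcases eq_or_lt_of_le (hmu0 i) with h | h
      · rw [← h]; simp
      · exact mul_nonpos_of_nonneg_of_nonpos (le_of_lt h) (hd i (hmuI i h))
    have hle1 : ∑ i, lam i * ⟪θ.a i, w⟫ ≤ M := by
      calc ∑ i, lam i * ⟪θ.a i, w⟫ ≤ ∑ i, lam i * M :=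
            Finset.sum_le_sum fun i _ => hS1 i
        _ = M := hsum1
    have hle2 : ∑ i, mu i * ⟪θ.d i, w⟫ ≤ 0 :=
      Finset.sum_nonpos fun i _ => hS2 i
    have hMeq : M = (∑ i, lam i * ⟪θ.a i, w⟫) + ∑ i, mu i * ⟪θ.d i, w⟫ := by
      rw [← hvw, hMvw]
    have heq1 : ∑ i, lam i * ⟪θ.a i, w⟫ = M := by linarith
    have heq2 : ∑ i, mu i * ⟪θ.d i, w⟫ = 0 := by linarith
    have hterm1 : ∀ i, 0 < lam i → ⟪θ.a i, w⟫ = M := by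
      have hz : ∑ i, (lam i * M - lam i * ⟪θ.a i, w⟫) = 0 := by
        rw [Finset.sum_sub_distrib, hsum1, heq1, sub_self]
      have hper := (Finset.sum_eq_zero_iff_of_nonneg
        (fun i _ => sub_nonneg.2 (hS1 i))).1 hz
      intro i hi
      have h0 := hper i (Finset.mem_univ i)
      have h1' : lam i * M = lam i * ⟪θ.a i, w⟫ := by linarith
      exact (mul_left_cancel₀ (ne_of_gt hi) h1').symm
    have hterm2 : ∀ i, 0 < mu i → ⟪θ.d i, w⟫ = 0 := by
      have hz : ∑ i, -(mu i * ⟪θ.d i, w⟫) = 0 := by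
        rw [Finset.sum_neg_distrib, heq2, neg_zero]
      have hper := (Finset.sum_eq_zero_iff_of_nonneg
        (fun i _ => neg_nonneg.2 (hS2 i))).1 hz
      intro i hi
      have h0 := hper i (Finset.mem_univ i)
      have h1' : mu i * ⟪θ.d i, w⟫ = 0 := by linarith
      rcases mul_eq_zero.1 h1' with h | h
      · exact absurd h (ne_of_gt hi)
      · exact h
    refine ⟨?_, ?_, hterm2, ?_⟩
    · intro i j hi hj
      rw [inner_sub_left, hterm1 i hi, hterm1 j hj, sub_self]
    · intro i j hiK _ hj
      rw [inner_sub_left, hterm1 j hj]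
      have := θ.le_dval zb w hiK
      linarith
    · intro i hiI _
      exact hd i hiI
  · rintro ⟨h1, h2, h3, h4⟩
    obtain ⟨j₀, hj₀⟩ : ∃ j, 0 < lam j := by
      by_contra hno
      push_neg at hno
      have hz : ∑ i, lam i = 0 :=
        Finset.sum_eq_zero fun i _ => le_antisymm (hno i) (hlam0 i)
      rw [hlam1] at hz
      norm_num at hz
    have hj₀K := hlamK j₀ hj₀
    have hd : ∀ i ∈ θ.Iact zb, ⟪θ.d i, w⟫ ≤ 0 := by
      intro i hi
      rcases eq_or_lt_of_le (hmu0 i) with h | h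
      · exact h4 i hi h.symm
      · exact le_of_eq (h3 i h)
    have hMs : M = ⟪θ.a j₀, w⟫ := by
      obtain ⟨jm, hjmK, hjm⟩ := θ.exists_dval zb w
      have hjle : ⟪θ.a j₀, w⟫ ≤ M := θ.le_dval zb w hj₀K
      rcases eq_or_lt_of_le (hlam0 jm) with h | h
      · have hle := h2 jm j₀ hjmK h.symm hj₀
        rw [inner_sub_left] at hle
        linarith
      · have heq := h1 jm j₀ h hj₀
        rw [inner_sub_left] at heq
        linarith
    have hvwM : ⟪vb, w⟫ = M := by
      rw [hvw]
      have hA : ∀ i, lam i * ⟪θ.a i, w⟫ = lam i * ⟪θ.a j₀, w⟫ := fun i => by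
        rcases eq_or_lt_of_le (hlam0 i) with h | h
        · rw [← h]; ring
        · have heq := h1 i j₀ h hj₀
          rw [inner_sub_left] at heq
          have : ⟪θ.a i, w⟫ = ⟪θ.a j₀, w⟫ := by linarith
          rw [this]
      have hB : ∀ i, mu i * ⟪θ.d i, w⟫ = 0 := fun i => by
        rcases eq_or_lt_of_le (hmu0 i) with h | h
        · rw [← h]; ring
        · rw [h3 i h]; ring
      rw [Finset.sum_congr rfl fun i _ => hA i, Finset.sum_congr rfl fun i _ => hB i,
        ← Finset.sum_mul, hlam1, one_mul, Finset.sum_const_zero, add_zero, hMs]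
    constructor
    · rw [htc]; exact hd
    · rw [hvwM]; exact θ.quot_tendsto zb w
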